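/- Let F be a field and let M be a matrix of homogeneous linear forms in x_1,…,x_n over F with block decomposition M = [[x_1·I_r + A, B], [C, D]], where I_r is the r×r identity matrix and all entries of A, B, C, D are linear forms in x_2,…,x_n only (not involving x_1). Then CR(M) ≥ r + CR(D). -/

import Mathlib

open MvPolynomial

section Defs

variable {F : Type*} [Field F]

/-- A polynomial in the block variables `x_{i,j}` (`i ∈ Fin d`, `j ∈ Fin n`) is
multilinear exactly in the blocks of `S`: every monomial has degree 1 in each block
`i ∈ S` and degree 0 in each block `i ∉ S`. -/
def IsMultilinearOn {d n : ℕ} (S : Finset (Fin d))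
    (f : MvPolynomial (Fin d × Fin n) F) : Prop :=
  ∀ m ∈ f.support, ∀ i : Fin d,
    (∑ j : Fin n, m (i, j)) = if i ∈ S then 1 else 0

/-- A multilinear form: degree 1 in every block of variables. -/
def IsMultilinear {d n : ℕ} (f : MvPolynomial (Fin d × Fin n) F) : Prop :=
  IsMultilinearOn Finset.univ f

/-- Commutative rank: the rank of the matrix over the field of fractions of the
polynomial ring. -/
noncomputable def CR {σ : Type*} {α β : Type*} [Fintype β]
    (M : Matrix α β (MvPolynomial σ F)) : ℕ :=
  (M.map (algebraMap (MvPolynomial σ F) (FractionRing (MvPolynomial σ F)))).rank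

/-- `M` is the sum of `r` outer products `u ⊗ v`, where `u` has entries multilinear
in the blocks of some `S ⊆ [d]` and `v` has entries multilinear in the complementary
blocks. -/
def HasPRDecomp {d n a b : ℕ}
    (M : Matrix (Fin a) (Fin b) (MvPolynomial (Fin d × Fin n) F)) (r : ℕ) : Prop :=
  ∃ (S : Fin r → Finset (Fin d))
    (u : Fin r → Fin a → MvPolynomial (Fin d × Fin n) F)
    (v : Fin r → Fin b → MvPolynomial (Fin d × Fin n) F),
    (∀ t i, IsMultilinearOn (S t) (u t i)) ∧
    (∀ t j, IsMultilinearOn (S t)ᶜ (v t j)) ∧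
    M = ∑ t, Matrix.of fun i j => u t i * v t j

/-- Partition rank of a matrix of multilinear forms. -/
noncomputable def PR {d n a b : ℕ}
    (M : Matrix (Fin a) (Fin b) (MvPolynomial (Fin d × Fin n) F)) : ℕ :=
  sInf {r | HasPRDecomp M r}

/-- Evaluation of a matrix of multilinear forms at a point `p ∈ (F^n)^d`. -/
noncomputable def evalMat {d n : ℕ} {α β : Type*}
    (M : Matrix α β (MvPolynomial (Fin d × Fin n) F)) (p : Fin d → Fin n → F) :
    Matrix α β F :=
  M.map (eval fun v => p v.1 v.2)

/-- Max-rank: the largest rank of a scalar evaluation. -/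
noncomputable def MaxR {d n : ℕ} {α β : Type*} [Fintype β]
    (M : Matrix α β (MvPolynomial (Fin d × Fin n) F)) : ℕ :=
  ⨆ p : Fin d → Fin n → F, (evalMat M p).rank

/-- Partial evaluation: substitute `x_i := p_i` for `i ∈ S`, leaving the other
blocks of variables untouched. -/
noncomputable def pevalMat {d n : ℕ} {α β : Type*}
    (M : Matrix α β (MvPolynomial (Fin d × Fin n) F)) (S : Finset (Fin d))
    (p : Fin d → Fin n → F) :
    Matrix α β (MvPolynomial (Fin d × Fin n) F) :=
  M.map (aeval fun v : Fin d × Fin n => if v.1 ∈ S then C (p v.1 v.2) else X v)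

end Defs

section D1

variable {F : Type*} [Field F]

/-- Partition-rank decomposition for matrices of linear forms: a sum of `r` outer
products, each either (scalars) ⊗ (linear forms) or (linear forms) ⊗ (scalars). -/
def HasPR1Decomp {n a b : ℕ}
    (M : Matrix (Fin a) (Fin b) (MvPolynomial (Fin n) F)) (r : ℕ) : Prop :=
  ∃ (c : Fin r → Bool)
    (u : Fin r → Fin a → MvPolynomial (Fin n) F)
    (v : Fin r → Fin b → MvPolynomial (Fin n) F),
    (∀ t i, (u t i).IsHomogeneous (if c t then 0 else 1)) ∧
    (∀ t j, (v t j).IsHomogeneous (if c t then 1 else 0)) ∧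
    M = ∑ t, Matrix.of fun i j => u t i * v t j

/-- Partition rank of a matrix of linear forms. -/
noncomputable def PR1 {n a b : ℕ}
    (M : Matrix (Fin a) (Fin b) (MvPolynomial (Fin n) F)) : ℕ :=
  sInf {r | HasPR1Decomp M r}

/-- Max-rank of a matrix of linear forms. -/
noncomputable def MaxR1 {n a b : ℕ}
    (M : Matrix (Fin a) (Fin b) (MvPolynomial (Fin n) F)) : ℕ :=
  ⨆ p : Fin n → F, (M.map (eval p)).rank

end D1

section Tensor3

variable {F : Type*} [Field F]

/-- Substitute the first two blocks of variables of a trilinear form at `x` and `y`,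
leaving a polynomial in the third block. -/
noncomputable def sub01 {n : ℕ} (T : MvPolynomial (Fin 3 × Fin n) F)
    (x y : Fin n → F) : MvPolynomial (Fin 3 × Fin n) F :=
  aeval (fun v : Fin 3 × Fin n =>
    if v.1 = 0 then C (x v.2) else if v.1 = 1 then C (y v.2) else X v) T

open Classical in
/-- The bias of a 3-tensor: the probability over `(x, y)` that `T(x, y, -)` is the
zero linear form. -/
noncomputable def bias {n : ℕ} [Fintype F] (T : MvPolynomial (Fin 3 × Fin n) F) : ℝ :=
  ((Finset.univ.filter fun p : (Fin n → F) × (Fin n → F) =>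
      sub01 T p.1 p.2 = 0).card : ℝ) /
    ((Fintype.card ((Fin n → F) × (Fin n → F))) : ℝ)

/-- The analytic rank of a 3-tensor. -/
noncomputable def AR {n : ℕ} [Fintype F] (T : MvPolynomial (Fin 3 × Fin n) F) : ℝ :=
  - Real.logb (Fintype.card F) (bias T)

/-- A slice-rank decomposition: `T = ∑ f_t g_t` with `f_t` a linear form in one
block and `g_t` a bilinear form in the other two blocks. -/
def HasSRDecomp {n : ℕ} (T : MvPolynomial (Fin 3 × Fin n) F) (r : ℕ) : Prop :=
  ∃ (c : Fin r → Fin 3) (f g : Fin r → MvPolynomial (Fin 3 × Fin n) F),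
    (∀ t, IsMultilinearOn {c t} (f t)) ∧
    (∀ t, IsMultilinearOn ({c t} : Finset (Fin 3))ᶜ (g t)) ∧
    T = ∑ t, f t * g t

/-- Slice rank of a 3-tensor. -/
noncomputable def SR {n : ℕ} (T : MvPolynomial (Fin 3 × Fin n) F) : ℕ :=
  sInf {r | HasSRDecomp T r}

/-- The matrix `mat T` of a 3-tensor, evaluated at `x` in its first block:
the `(j,k)` entry is `T(x, e_j, e_k)`. -/
noncomputable def matT {n : ℕ} (T : MvPolynomial (Fin 3 × Fin n) F)
    (x : Fin n → F) : Matrix (Fin n) (Fin n) F :=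
  Matrix.of fun j k => eval (fun v : Fin 3 × Fin n =>
    if v.1 = 0 then x v.2
    else if v.1 = 1 then (if v.2 = j then 1 else 0)
    else (if v.2 = k then 1 else 0)) T

end Tensor3

section Mult

variable {F : Type*} [Field F]

/-- `mult(f, p)`: the minimum total degree of a monomial of `f(x + p)`. -/
noncomputable def polyMult {n : ℕ} (f : MvPolynomial (Fin n) F) (p : Fin n → F) : ℕ :=
  sInf {k | ∃ m ∈ (aeval (fun i : Fin n => X i + C (p i)) f :
    MvPolynomial (Fin n) F).support, (∑ i, m i) = k}

end Mult

section Aux15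

open Matrix Polynomial

variable {K : Type*} [Field K]

lemma aux15_submatrix_rank_le {m n ι κ : Type*} [Fintype m] [Fintype n] [Fintype ι] [Fintype κ]
    [DecidableEq m] [DecidableEq n] (A : Matrix m n K) (f : ι → m) (g : κ → n) :
    (A.submatrix f g).rank ≤ A.rank := by
  have h1 : (1 : Matrix m m K).submatrix f id * A = A.submatrix f id := by
    ext i j
    simp [Matrix.mul_apply, Matrix.one_apply]
  have h2 : A.submatrix f id * (1 : Matrix n n K).submatrix id g = A.submatrix f g := by
    ext i j
    simp [Matrix.mul_apply, Matrix.one_apply]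
  calc (A.submatrix f g).rank
      = ((1 : Matrix m m K).submatrix f id * A * (1 : Matrix n n K).submatrix id g).rank := by
        rw [h1, h2]
    _ ≤ ((1 : Matrix m m K).submatrix f id * A).rank := Matrix.rank_mul_le_left _ _
    _ ≤ A.rank := Matrix.rank_mul_le_right _ _

lemma aux15_card_le_rank {m n ι : Type*} [Fintype m] [Fintype n] [Fintype ι]
    [DecidableEq m] [DecidableEq n] [DecidableEq ι] (A : Matrix m n K) (f : ι → m) (g : ι → n)
    (h : (A.submatrix f g).det ≠ 0) : Fintype.card ι ≤ A.rank := by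
  have hu : IsUnit (A.submatrix f g) :=
    (Matrix.isUnit_iff_isUnit_det _).mpr (isUnit_iff_ne_zero.mpr h)
  calc Fintype.card ι = (A.submatrix f g).rank := (Matrix.rank_of_isUnit _ hu).symm
    _ ≤ A.rank := aux15_submatrix_rank_le A f g

lemma aux15_exists_cols {m n : Type*} [Fintype m] [Fintype n]
    (A : Matrix m n K) {k : ℕ} (hk : A.rank = k) :
    ∃ g : Fin k → n, (A.submatrix id g).rank = k := by
  classical
  obtain ⟨b, hbsub, hbspan, hbind⟩ := exists_linearIndependent K (Set.range Aᵀ)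
  have hbfin : b.Finite := (Set.finite_range Aᵀ).subset hbsub
  haveI : Fintype b := hbfin.fintype
  have hfr : Module.finrank K (Submodule.span K b) = b.toFinset.card :=
    finrank_span_set_eq_card hbind
  have hcard : b.toFinset.card = k := by
    rw [← hfr, hbspan, ← hk, Matrix.rank_eq_finrank_span_cols]; rfl
  have hcb : Fintype.card b = k := by rw [← Set.toFinset_card]; exact hcard
  let e : Fin k ≃ b := (Fintype.equivFinOfCardEq hcb).symm
  choose jj hjj using fun x : b => hbsub x.2
  refine ⟨fun i => jj (e i), ?_⟩
  have hrows : (A.submatrix id fun i => jj (e i))ᵀ = fun i => ((e i : b) : m → K) := by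
    funext i
    exact hjj (e i)
  have hrange : Set.range (A.submatrix id fun i => jj (e i))ᵀ = b := by
    rw [hrows]
    have h1 : (fun i => ((e i : b) : m → K)) = Subtype.val ∘ e := rfl
    rw [h1, Set.range_comp, e.surjective.range_eq, Set.image_univ, Subtype.range_coe]
  rw [Matrix.rank_eq_finrank_span_cols,
    show Set.range (A.submatrix id fun i => jj (e i)).col = b from hrange, hfr, hcard]

lemma aux15_exists_minor {m n : Type*} [Fintype m] [Fintype n] [DecidableEq m] [DecidableEq n]
    (A : Matrix m n K) {k : ℕ} (hk : A.rank = k) :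
    ∃ (f : Fin k → m) (g : Fin k → n), (A.submatrix f g).det ≠ 0 := by
  classical
  obtain ⟨g, hg⟩ := aux15_exists_cols A hk
  have h2 : (A.submatrix id g)ᵀ.rank = k := by rw [Matrix.rank_transpose]; exact hg
  obtain ⟨f, hf⟩ := aux15_exists_cols (A.submatrix id g)ᵀ h2
  refine ⟨f, g, ?_⟩
  have heq : ((A.submatrix id g)ᵀ.submatrix id f)ᵀ = A.submatrix f g := by
    ext i j; rfl
  have hr : (A.submatrix f g).rank = k := by
    rw [← heq, Matrix.rank_transpose]; exact hf
  have hrange : LinearMap.range (A.submatrix f g).mulVecLin = ⊤ := by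
    apply Submodule.eq_top_of_finrank_eq
    have h3 : Module.finrank K ↥(LinearMap.range (A.submatrix f g).mulVecLin)
        = (A.submatrix f g).rank := rfl
    rw [h3, hr, Module.finrank_fin_fun]
  have hsurj : Function.Surjective (A.submatrix f g).mulVec :=
    LinearMap.range_eq_top.mp hrange
  have hu : IsUnit (A.submatrix f g) := Matrix.mulVec_surjective_iff_isUnit.mp hsurj
  exact IsUnit.ne_zero ((Matrix.isUnit_iff_isUnit_det _).mp hu)

lemma aux15_det_blocks_ne_zero {r k : ℕ}
    (A : Matrix (Fin r) (Fin r) K) (B : Matrix (Fin r) (Fin k) K)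
    (C : Matrix (Fin k) (Fin r) K) (D : Matrix (Fin k) (Fin k) K) (hD : D.det ≠ 0) :
    (Matrix.fromBlocks
      ((Polynomial.X : K[X]) • 1 + A.map Polynomial.C) (B.map Polynomial.C)
      (C.map Polynomial.C) (D.map Polynomial.C)).det ≠ 0 := by
  classical
  have hDu : IsUnit D.det := isUnit_iff_ne_zero.mpr hD
  have hmul : (D.map (Polynomial.C : K →+* K[X])) * (D⁻¹.map (Polynomial.C : K →+* K[X])) = 1 := by
    rw [← Matrix.map_mul, Matrix.mul_nonsing_inv D hDu, Matrix.map_one _ (map_zero _) (map_one _)]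
  haveI : Invertible (D.map (Polynomial.C : K →+* K[X])) :=
    invertibleOfRightInverse _ _ hmul
  rw [Matrix.det_fromBlocks₂₂]
  have hinv : ⅟(D.map (Polynomial.C : K →+* K[X])) = D⁻¹.map (Polynomial.C : K →+* K[X]) :=
    invOf_eq_right_inv hmul
  have hschur : (Polynomial.X : K[X]) • 1 + A.map Polynomial.C -
      B.map Polynomial.C * ⅟(D.map (Polynomial.C : K →+* K[X])) * C.map Polynomial.C
      = charmatrix (-(A - B * D⁻¹ * C)) := by
    rw [hinv, ← Matrix.map_mul, ← Matrix.map_mul]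
    ext i j : 2
    by_cases h : i = j
    · subst h
      rw [charmatrix_apply_eq]
      simp only [Matrix.sub_apply, Matrix.add_apply, Matrix.smul_apply, Matrix.one_apply_eq,
        Matrix.map_apply, Matrix.neg_apply, map_sub, map_neg, smul_eq_mul, mul_one]
      ring_nf
    · rw [charmatrix_apply_ne _ _ _ h]
      simp only [Matrix.sub_apply, Matrix.add_apply, Matrix.smul_apply, Matrix.one_apply_ne h,
        Matrix.map_apply, Matrix.neg_apply, map_sub, map_neg, smul_eq_mul, mul_zero]
      ring_nf
  rw [hschur]
  refine mul_ne_zero ?_ ?_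
  · have hdc : (D.map (Polynomial.C : K →+* K[X])).det = Polynomial.C D.det := by
      rw [← RingHom.mapMatrix_apply, ← RingHom.map_det]
    rw [hdc]
    exact Polynomial.C_ne_zero.mpr hD
  · exact (Matrix.charpoly_monic (-(A - B * D⁻¹ * C))).ne_zero

lemma aux15_det_mv_ne_zero (F : Type*) [Field F] (n r k : ℕ)
    (A : Matrix (Fin r) (Fin r) (MvPolynomial (Fin (n + 1)) F))
    (B : Matrix (Fin r) (Fin k) (MvPolynomial (Fin (n + 1)) F))
    (C : Matrix (Fin k) (Fin r) (MvPolynomial (Fin (n + 1)) F))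
    (D : Matrix (Fin k) (Fin k) (MvPolynomial (Fin (n + 1)) F))
    (hA : ∀ i j, ∀ m ∈ (A i j).support, m 0 = 0)
    (hB : ∀ i j, ∀ m ∈ (B i j).support, m 0 = 0)
    (hC : ∀ i j, ∀ m ∈ (C i j).support, m 0 = 0)
    (hD : ∀ i j, ∀ m ∈ (D i j).support, m 0 = 0)
    (hdet : D.det ≠ 0) :
    (Matrix.fromBlocks
      ((MvPolynomial.X 0 : MvPolynomial (Fin (n + 1)) F) • 1 + A) B C D).det ≠ 0 := by
  classical
  set S := MvPolynomial (Fin n) F with hS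
  set K₁ := FractionRing S with hK₁
  let φ : MvPolynomial (Fin (n + 1)) F →+* Polynomial K₁ :=
    (Polynomial.mapRingHom (algebraMap S K₁)).comp
      ((MvPolynomial.finSuccEquiv F n).toAlgHom.toRingHom)
  have hφeq : ∀ p, φ p = Polynomial.map (algebraMap S K₁) (MvPolynomial.finSuccEquiv F n p) :=
    fun p => rfl
  have hφinj : Function.Injective φ := by
    intro a b hab
    rw [hφeq, hφeq] at hab
    exact (MvPolynomial.finSuccEquiv F n).injective
      (Polynomial.map_injective _ (IsFractionRing.injective S K₁) hab)
  have hconst : ∀ p : MvPolynomial (Fin (n + 1)) F, (∀ m ∈ p.support, m 0 = 0) →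
      φ p = Polynomial.C (algebraMap S K₁ ((MvPolynomial.finSuccEquiv F n p).coeff 0)) := by
    intro p hp
    have hdeg : MvPolynomial.degreeOf 0 p = 0 := by
      rw [MvPolynomial.degreeOf_eq_sup]
      exact le_antisymm (Finset.sup_le fun m hm => (hp m hm).le) (Nat.zero_le _)
    have hnat : (MvPolynomial.finSuccEquiv F n p).natDegree = 0 := by
      rw [MvPolynomial.natDegree_finSuccEquiv, hdeg]
    conv_lhs => rw [hφeq, Polynomial.eq_C_of_natDegree_eq_zero hnat, Polynomial.map_C]
  let A₁ : Matrix (Fin r) (Fin r) K₁ :=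
    fun i j => algebraMap S K₁ ((MvPolynomial.finSuccEquiv F n (A i j)).coeff 0)
  let B₁ : Matrix (Fin r) (Fin k) K₁ :=
    fun i j => algebraMap S K₁ ((MvPolynomial.finSuccEquiv F n (B i j)).coeff 0)
  let C₁ : Matrix (Fin k) (Fin r) K₁ :=
    fun i j => algebraMap S K₁ ((MvPolynomial.finSuccEquiv F n (C i j)).coeff 0)
  let D₁ : Matrix (Fin k) (Fin k) K₁ :=
    fun i j => algebraMap S K₁ ((MvPolynomial.finSuccEquiv F n (D i j)).coeff 0)
  have hX : φ (MvPolynomial.X 0) = Polynomial.X := by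
    rw [hφeq, MvPolynomial.finSuccEquiv_X_zero, Polynomial.map_X]
  have hmapD : D.map φ = D₁.map Polynomial.C :=
    Matrix.ext fun i j => hconst _ (hD i j)
  have hmapB : B.map φ = B₁.map Polynomial.C :=
    Matrix.ext fun i j => hconst _ (hB i j)
  have hmapC : C.map φ = C₁.map Polynomial.C :=
    Matrix.ext fun i j => hconst _ (hC i j)
  have hmapA : ((MvPolynomial.X 0 : MvPolynomial (Fin (n + 1)) F) • 1 + A).map φ
      = (Polynomial.X : Polynomial K₁) • 1 + A₁.map Polynomial.C := by
    refine Matrix.ext fun i j => ?_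
    by_cases h : i = j
    · subst h
      simp only [Matrix.map_apply, Matrix.add_apply, Matrix.smul_apply, smul_eq_mul,
        Matrix.one_apply_eq, mul_one, map_add, hX, hconst _ (hA i i)]
      rfl
    · simp only [Matrix.map_apply, Matrix.add_apply, Matrix.smul_apply, smul_eq_mul,
        Matrix.one_apply_ne h, mul_zero, map_add, map_zero, hconst _ (hA i j), zero_add]
      rfl
  have hmap : (Matrix.fromBlocks
        ((MvPolynomial.X 0 : MvPolynomial (Fin (n + 1)) F) • 1 + A) B C D).map φ
      = Matrix.fromBlocks ((Polynomial.X : Polynomial K₁) • 1 + A₁.map Polynomial.C)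
          (B₁.map Polynomial.C) (C₁.map Polynomial.C) (D₁.map Polynomial.C) := by
    rw [Matrix.fromBlocks_map, hmapA, hmapB, hmapC, hmapD]
  have hD₁ : D₁.det ≠ 0 := by
    intro h0
    apply hdet
    apply hφinj
    rw [map_zero, RingHom.map_det, RingHom.mapMatrix_apply, hmapD, ← RingHom.mapMatrix_apply,
      ← RingHom.map_det, h0, map_zero]
  intro h0
  refine aux15_det_blocks_ne_zero A₁ B₁ C₁ D₁ hD₁ ?_
  rw [← hmap, ← RingHom.mapMatrix_apply, ← RingHom.map_det, h0, map_zero]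

end Aux15
/-- If `M = [[x₁·I_r + A, B], [C', D]]` where all entries of
`A, B, C', D` are linear forms not involving `x₁` (variable `0`), then
`CR(M) ≥ r + CR(D)`. -/
theorem statement_15 (F : Type*) [Field F] (n r s t : ℕ)
    (A : Matrix (Fin r) (Fin r) (MvPolynomial (Fin (n + 1)) F))
    (B : Matrix (Fin r) (Fin t) (MvPolynomial (Fin (n + 1)) F))
    (C' : Matrix (Fin s) (Fin r) (MvPolynomial (Fin (n + 1)) F))
    (D : Matrix (Fin s) (Fin t) (MvPolynomial (Fin (n + 1)) F))
    (hA : ∀ i j, (A i j).IsHomogeneous 1 ∧ ∀ m ∈ (A i j).support, m 0 = 0)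
    (hB : ∀ i j, (B i j).IsHomogeneous 1 ∧ ∀ m ∈ (B i j).support, m 0 = 0)
    (hC : ∀ i j, (C' i j).IsHomogeneous 1 ∧ ∀ m ∈ (C' i j).support, m 0 = 0)
    (hD : ∀ i j, (D i j).IsHomogeneous 1 ∧ ∀ m ∈ (D i j).support, m 0 = 0) :
    r + CR D ≤ CR (Matrix.fromBlocks
      ((MvPolynomial.X 0 : MvPolynomial (Fin (n + 1)) F) •
        (1 : Matrix (Fin r) (Fin r) (MvPolynomial (Fin (n + 1)) F)) + A) B C' D) := by
  classical
  let R := MvPolynomial (Fin (n + 1)) F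
  let K := FractionRing R
  have hkD : (D.map (algebraMap R K)).rank = CR D := rfl
  obtain ⟨f, g, hfg⟩ := aux15_exists_minor (D.map (algebraMap R K)) hkD
  have hdet1 : (D.submatrix f g).det ≠ 0 := by
    intro h0
    apply hfg
    rw [Matrix.submatrix_map, ← RingHom.mapMatrix_apply, ← RingHom.map_det, h0, map_zero]
  have hbig : (Matrix.fromBlocks
      ((MvPolynomial.X 0 : MvPolynomial (Fin (n + 1)) F) • 1 + A)
      (B.submatrix id g) (C'.submatrix f id) (D.submatrix f g)).det ≠ 0 :=
    aux15_det_mv_ne_zero F n r (CR D) A (B.submatrix id g) (C'.submatrix f id)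
      (D.submatrix f g) (fun i j => (hA i j).2) (fun i j => (hB i (g j)).2)
      (fun i j => (hC (f i) j).2) (fun i j => (hD (f i) (g j)).2) hdet1
  set M := Matrix.fromBlocks
      ((MvPolynomial.X 0 : MvPolynomial (Fin (n + 1)) F) •
        (1 : Matrix (Fin r) (Fin r) (MvPolynomial (Fin (n + 1)) F)) + A) B C' D with hM
  have hsub : M.submatrix (Sum.map id f) (Sum.map id g)
      = Matrix.fromBlocks
        ((MvPolynomial.X 0 : MvPolynomial (Fin (n + 1)) F) • 1 + A)
        (B.submatrix id g) (C'.submatrix f id) (D.submatrix f g) := by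
    ext i j
    rcases i with i | i <;> rcases j with j | j <;> rfl
  have hdet2 : (((M.map (algebraMap R K)).submatrix (Sum.map id f) (Sum.map id g))).det ≠ 0 := by
    rw [Matrix.submatrix_map, hsub, ← RingHom.mapMatrix_apply, ← RingHom.map_det]
    intro h0
    exact hbig ((map_eq_zero_iff _ (IsFractionRing.injective R K)).mp h0)
  have hcard := aux15_card_le_rank (M.map (algebraMap R K)) (Sum.map id f) (Sum.map id g) hdet2
  have hc : Fintype.card (Fin r ⊕ Fin (CR D)) = r + CR D := by simp
  rw [hc] at hcard
  exact hcard
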